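/- Let ℓ ≥ 1 and for v ≥ 0 define N(v) = max(0, 45ℓ − min_{0 ≤ k ≤ 5ℓ}(Γ₂(k+v) − Γ₁(k))), where Γ₁, Γ₂ are the enumerating functions of the numerical semigroups ⟨2,10ℓ+1⟩ and ⟨5,25ℓ+1⟩ respectively. Then min over v ≥ 0 of (N(v) + 2v) equals 26ℓ + 1. -/
import Mathlib


/-- Membership in the numerical semigroup `⟨2, 10ℓ+1⟩`. -/
def inGamma1 (ℓ : ℕ) (x : ℕ) : Prop := ∃ a b : ℕ, x = 2 * a + (10 * ℓ + 1) * b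

/-- Membership in the numerical semigroup `⟨5, 25ℓ+1⟩`. -/
def inGamma2 (ℓ : ℕ) (x : ℕ) : Prop := ∃ a b : ℕ, x = 5 * a + (25 * ℓ + 1) * b

def g1 (ℓ k : ℕ) : ℕ := if k ≤ 5 * ℓ then 2 * k else 5 * ℓ + k

def g2 (ℓ m : ℕ) : ℕ :=
  if m ≤ 5 * ℓ then 5 * m
  else if m ≤ 15 * ℓ then 25 * ℓ + 5 * ((m - 5 * ℓ) / 2) + (m - 5 * ℓ) % 2
  else if m ≤ 30 * ℓ then 50 * ℓ + 5 * ((m - 15 * ℓ) / 3) + (m - 15 * ℓ) % 3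
  else if m ≤ 50 * ℓ then 75 * ℓ + 5 * ((m - 30 * ℓ) / 4) + (m - 30 * ℓ) % 4
  else 50 * ℓ + m

lemma g1_mono (ℓ : ℕ) : StrictMono (g1 ℓ) := by
  apply strictMono_nat_of_lt_succ
  intro n
  unfold g1
  split_ifs <;> omega

lemma g2_mono (ℓ : ℕ) : StrictMono (g2 ℓ) := by
  apply strictMono_nat_of_lt_succ
  intro n
  unfold g2
  split_ifs <;> omega

lemma g1_range (ℓ : ℕ) : Set.range (g1 ℓ) = {x | inGamma1 ℓ x} := by
  ext x
  constructor
  · rintro ⟨k, rfl⟩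
    unfold g1
    split_ifs with h
    · exact ⟨k, 0, by ring⟩
    · rcases Nat.even_or_odd (5 * ℓ + k) with ⟨c, hc⟩ | ⟨c, hc⟩
      · exact ⟨c, 0, by omega⟩
      · exact ⟨c - 5 * ℓ, 1, by omega⟩
  · rintro ⟨a, b, rfl⟩
    rcases Nat.eq_zero_or_pos b with rfl | hb
    · rcases le_or_gt a (5 * ℓ) with h | h
      · exact ⟨a, by unfold g1; split_ifs <;> omega⟩
      · exact ⟨2 * a - 5 * ℓ, by unfold g1; split_ifs <;> omega⟩
    · have h1 : 10 * ℓ + 1 ≤ (10 * ℓ + 1) * b := Nat.le_mul_of_pos_right _ hb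
      refine ⟨2 * a + (10 * ℓ + 1) * b - 5 * ℓ, ?_⟩
      unfold g1
      split_ifs <;> omega

lemma mem2 (ℓ x : ℕ) : inGamma2 ℓ x ↔
    (x % 5 = 0 ∨ (x % 5 = 1 ∧ 25 * ℓ + 1 ≤ x) ∨ (x % 5 = 2 ∧ 50 * ℓ + 2 ≤ x) ∨
      (x % 5 = 3 ∧ 75 * ℓ + 3 ≤ x) ∨ (x % 5 = 4 ∧ 100 * ℓ + 4 ≤ x)) := by
  constructor
  · rintro ⟨a, b, rfl⟩
    obtain ⟨c, r, hr5, rfl⟩ : ∃ c r, r < 5 ∧ b = 5 * c + r := ⟨b / 5, b % 5, by omega, by omega⟩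
    have hT : (25 * ℓ + 1) * (5 * c + r) = 5 * ((25 * ℓ + 1) * c + 5 * ℓ * r) + r := by ring
    have hc0 : 25 * ℓ * c ≤ (25 * ℓ + 1) * c := Nat.mul_le_mul_right _ (by omega)
    interval_cases r <;> rw [hT] <;> omega
  · rintro (h | ⟨h, hx⟩ | ⟨h, hx⟩ | ⟨h, hx⟩ | ⟨h, hx⟩)
    · exact ⟨x / 5, 0, by omega⟩
    · exact ⟨(x - (25 * ℓ + 1)) / 5, 1, by omega⟩
    · exact ⟨(x - (50 * ℓ + 2)) / 5, 2, by omega⟩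
    · exact ⟨(x - (75 * ℓ + 3)) / 5, 3, by omega⟩
    · exact ⟨(x - (100 * ℓ + 4)) / 5, 4, by omega⟩

lemma g2_range (ℓ : ℕ) : Set.range (g2 ℓ) = {x | inGamma2 ℓ x} := by
  ext x
  simp only [Set.mem_setOf_eq, mem2]
  constructor
  · rintro ⟨m, rfl⟩
    unfold g2
    split_ifs <;> omega
  · rintro (h | ⟨h, hx⟩ | ⟨h, hx⟩ | ⟨h, hx⟩ | ⟨h, hx⟩)
    · rcases le_or_gt x (25 * ℓ) with h1 | h1
      · exact ⟨x / 5, by unfold g2; split_ifs <;> omega⟩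
      rcases le_or_gt x (50 * ℓ) with h2 | h2
      · exact ⟨5 * ℓ + 2 * ((x - 25 * ℓ) / 5), by unfold g2; split_ifs <;> omega⟩
      rcases le_or_gt x (75 * ℓ) with h3 | h3
      · exact ⟨15 * ℓ + 3 * ((x - 50 * ℓ) / 5), by unfold g2; split_ifs <;> omega⟩
      rcases le_or_gt x (100 * ℓ) with h4 | h4
      · exact ⟨30 * ℓ + 4 * ((x - 75 * ℓ) / 5), by unfold g2; split_ifs <;> omega⟩
      · exact ⟨x - 50 * ℓ, by unfold g2; split_ifs <;> omega⟩
    · rcases le_or_gt x (50 * ℓ + 1) with h2 | h2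
      · exact ⟨5 * ℓ + 2 * ((x - 25 * ℓ - 1) / 5) + 1, by unfold g2; split_ifs <;> omega⟩
      rcases le_or_gt x (75 * ℓ + 1) with h3 | h3
      · exact ⟨15 * ℓ + 3 * ((x - 50 * ℓ - 1) / 5) + 1, by unfold g2; split_ifs <;> omega⟩
      rcases le_or_gt x (100 * ℓ + 1) with h4 | h4
      · exact ⟨30 * ℓ + 4 * ((x - 75 * ℓ - 1) / 5) + 1, by unfold g2; split_ifs <;> omega⟩
      · exact ⟨x - 50 * ℓ, by unfold g2; split_ifs <;> omega⟩
    · rcases le_or_gt x (75 * ℓ + 2) with h3 | h3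
      · exact ⟨15 * ℓ + 3 * ((x - 50 * ℓ - 2) / 5) + 2, by unfold g2; split_ifs <;> omega⟩
      rcases le_or_gt x (100 * ℓ + 2) with h4 | h4
      · exact ⟨30 * ℓ + 4 * ((x - 75 * ℓ - 2) / 5) + 2, by unfold g2; split_ifs <;> omega⟩
      · exact ⟨x - 50 * ℓ, by unfold g2; split_ifs <;> omega⟩
    · rcases le_or_gt x (100 * ℓ + 3) with h4 | h4
      · exact ⟨30 * ℓ + 4 * ((x - 75 * ℓ - 3) / 5) + 3, by unfold g2; split_ifs <;> omega⟩
      · exact ⟨x - 50 * ℓ, by unfold g2; split_ifs <;> omega⟩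
    · exact ⟨x - 50 * ℓ, by unfold g2; split_ifs <;> omega⟩

lemma infinite1 (ℓ : ℕ) : {x | inGamma1 ℓ x}.Infinite := by
  rw [← g1_range]
  exact Set.infinite_range_of_injective (g1_mono ℓ).injective

lemma infinite2 (ℓ : ℕ) : {x | inGamma2 ℓ x}.Infinite := by
  rw [← g2_range]
  exact Set.infinite_range_of_injective (g2_mono ℓ).injective

lemma nth1 (ℓ : ℕ) : Nat.nth (inGamma1 ℓ) = g1 ℓ :=
  Set.range_injOn_strictMono (Nat.nth_strictMono (infinite1 ℓ)) (g1_mono ℓ)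
    ((Nat.range_nth_of_infinite (infinite1 ℓ)).trans (g1_range ℓ).symm)

lemma nth2 (ℓ : ℕ) : Nat.nth (inGamma2 ℓ) = g2 ℓ :=
  Set.range_injOn_strictMono (Nat.nth_strictMono (infinite2 ℓ)) (g2_mono ℓ)
    ((Nat.range_nth_of_infinite (infinite2 ℓ)).trans (g2_range ℓ).symm)

/-- `N(v) = max(0, 45ℓ − min_{0 ≤ k ≤ 5ℓ} (Γ₂(k+v) − Γ₁(k)))`, where `Γ₁, Γ₂` are the
enumerating functions (`Nat.nth`) of the two semigroups. -/
noncomputable def Nfun (ℓ v : ℕ) : ℕ :=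
  ((45 * ℓ : ℤ) -
    (Finset.Icc 0 (5 * ℓ)).inf' ⟨0, by simp⟩
      (fun k => (Nat.nth (inGamma2 ℓ) (k + v) : ℤ) - (Nat.nth (inGamma1 ℓ) k : ℤ))).toNat

/-- `min_{v ≥ 0} (N(v) + 2v) = 26ℓ + 1`. -/
theorem stmt_17 (ℓ : ℕ) (hℓ : 0 < ℓ) :
    sInf {x : ℕ | ∃ v : ℕ, x = Nfun ℓ v + 2 * v} = 26 * ℓ + 1 := by
  have hNfun : ∀ v, Nfun ℓ v =
      ((45 * ℓ : ℤ) - (Finset.Icc 0 (5 * ℓ)).inf' ⟨0, by simp⟩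
        (fun k => (g2 ℓ (k + v) : ℤ) - (g1 ℓ k : ℤ))).toNat := by
    intro v
    simp only [Nfun, nth1, nth2]
  -- value at v = 13ℓ
  have h13 : Nfun ℓ (13 * ℓ) = 1 := by
    rw [hNfun]
    have hmem : (1 : ℕ) ∈ Finset.Icc 0 (5 * ℓ) := by
      simp [Finset.mem_Icc]; omega
    have hle : (Finset.Icc 0 (5 * ℓ)).inf' ⟨0, by simp⟩
        (fun k => (g2 ℓ (k + 13 * ℓ) : ℤ) - (g1 ℓ k : ℤ)) ≤ 45 * ℓ - 1 := by
      refine le_trans (Finset.inf'_le _ hmem) ?_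
      have h1 : g2 ℓ (1 + 13 * ℓ) = 45 * ℓ + 1 := by unfold g2; split_ifs <;> omega
      have h2 : g1 ℓ 1 = 2 := by unfold g1; split_ifs <;> omega
      rw [h1, h2]
      push_cast
      omega
    have hge : (45 * ℓ - 1 : ℤ) ≤ (Finset.Icc 0 (5 * ℓ)).inf' ⟨0, by simp⟩
        (fun k => (g2 ℓ (k + 13 * ℓ) : ℤ) - (g1 ℓ k : ℤ)) := by
      apply Finset.le_inf'
      intro k hk
      simp only [Finset.mem_Icc] at hk
      have hk5 : k ≤ 5 * ℓ := hk.2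
      have h2 : g1 ℓ k = 2 * k := by unfold g1; split_ifs <;> omega
      have h1 : 45 * ℓ + 2 * k ≤ g2 ℓ (k + 13 * ℓ) + 1 := by
        unfold g2; split_ifs <;> omega
      rw [h2]
      push_cast
      omega
    have : (Finset.Icc 0 (5 * ℓ)).inf' ⟨0, by simp⟩
        (fun k => (g2 ℓ (k + 13 * ℓ) : ℤ) - (g1 ℓ k : ℤ)) = 45 * ℓ - 1 :=
      le_antisymm hle hge
    rw [this]
    omega
  have hmemS : 26 * ℓ + 1 ∈ {x : ℕ | ∃ v : ℕ, x = Nfun ℓ v + 2 * v} :=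
    ⟨13 * ℓ, by rw [h13]; ring⟩
  refine le_antisymm (Nat.sInf_le hmemS) (le_csInf ⟨_, hmemS⟩ ?_)
  rintro x ⟨v, rfl⟩
  rcases le_or_gt v (13 * ℓ) with hv | hv
  · -- need Nfun ℓ v ≥ 26ℓ + 1 - 2v
    rw [hNfun]
    -- find witness k₀ with g2 (k₀+v) - g1 k₀ ≤ 19ℓ + 2v - 1
    obtain ⟨k₀, hk₀mem, hbound⟩ :
        ∃ k₀, k₀ ∈ Finset.Icc 0 (5 * ℓ) ∧ g2 ℓ (k₀ + v) + 1 ≤ 19 * ℓ + 2 * v + g1 ℓ k₀ := by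
      rcases le_or_gt v (5 * ℓ) with h5 | h5
      · refine ⟨0, by simp, ?_⟩
        have hg1 : g1 ℓ 0 = 0 := by unfold g1; split_ifs <;> omega
        have hg2 : g2 ℓ (0 + v) = 5 * v := by unfold g2; split_ifs <;> omega
        omega
      · rcases Nat.even_or_odd (v - 5 * ℓ) with ⟨c, hc⟩ | ⟨c, hc⟩
        · refine ⟨1, by simp; omega, ?_⟩
          have hg1 : g1 ℓ 1 = 2 := by unfold g1; split_ifs <;> omega
          have hg2 : g2 ℓ (1 + v) = 25 * ℓ + 5 * c + 1 := by
            unfold g2; split_ifs <;> omega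
          omega
        · refine ⟨0, by simp, ?_⟩
          have hg1 : g1 ℓ 0 = 0 := by unfold g1; split_ifs <;> omega
          have hg2 : g2 ℓ (0 + v) = 25 * ℓ + 5 * c + 1 := by
            unfold g2; split_ifs <;> omega
          omega
    have hI : (Finset.Icc 0 (5 * ℓ)).inf' ⟨0, by simp⟩
        (fun k => (g2 ℓ (k + v) : ℤ) - (g1 ℓ k : ℤ)) ≤ 19 * ℓ + 2 * v - 1 := by
      refine le_trans (Finset.inf'_le _ hk₀mem) ?_
      push_cast
      omega
    have h0 : (0 : ℤ) ≤ (45 * ℓ : ℤ) - (Finset.Icc 0 (5 * ℓ)).inf' ⟨0, by simp⟩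
        (fun k => (g2 ℓ (k + v) : ℤ) - (g1 ℓ k : ℤ)) := by omega
    have : (26 * ℓ + 1 - 2 * v : ℕ) ≤ ((45 * ℓ : ℤ) - (Finset.Icc 0 (5 * ℓ)).inf' ⟨0, by simp⟩
        (fun k => (g2 ℓ (k + v) : ℤ) - (g1 ℓ k : ℤ))).toNat := by
      rw [Int.le_toNat h0]
      push_cast
      omega
    omega
  · omega
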